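/- Let λ₁, λ₂ ∈ ℝ, set A = e^{λ₁}, B = e^{λ₁+λ₂}, and s = (1 + B + √((1−B)² + 4A))/2. Let L be the 4×4 real matrix with rows (1,0,1,0), (A,0,A,0), (0,1,0,1), (0,B,0,B). Then: (i) s > 0 and (s−1)(s−B) = A; (ii) the vector r = (1, A, s−1, B(s−1)) satisfies L·r = s·r; (iii) the vector l = (s−B, 1, s−B, 1) satisfies lᵀ·L = s·lᵀ; (iv) every complex eigenvalue z of L with z ≠ s satisfies |z| < s; and (v) the vector μ = (1/(s²+A−B))·(s−B, A, A, B(s−1)) has strictly positive entries summing to 1, and μ_w is proportional to l_w·r_w. -/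

import Mathlib

set_option maxHeartbeats 1600000


/-- **Closed-form RPF analysis for one neuron with a range-2 potential**
`ψ(ω) = λ₁·ω₀(0) + λ₂·ω₀(0)·ω₀(1)`: with `A = e^{λ₁}`, `B = e^{λ₁+λ₂}` and
`s = (1 + B + √((1−B)² + 4A))/2`, the eigenvalue equation `(s−1)(s−B) = A`
holds, `r = (1, A, s−1, B(s−1))` and `l = (s−B, 1, s−B, 1)` are right and left
eigenvectors of the RPF matrix for `s`, every other complex eigenvalue has
modulus `< s`, and `μ = (s−B, A, A, B(s−1))/(s²+A−B)` is the Gibbs (invariant)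
probability vector, proportional to `(l_w·r_w)_w`. -/
theorem one_neuron_range_two_closed_form
    (lam1 lam2 : ℝ)
    (A B s : ℝ)
    (hA : A = Real.exp lam1) (hB : B = Real.exp (lam1 + lam2))
    (hs : s = (1 + B + Real.sqrt ((1 - B) ^ 2 + 4 * A)) / 2)
    (L : Matrix (Fin 4) (Fin 4) ℝ)
    (hL : L = !![1, 0, 1, 0; A, 0, A, 0; 0, 1, 0, 1; 0, B, 0, B])
    (r l μ : Fin 4 → ℝ)
    (hr : r = ![1, A, s - 1, B * (s - 1)])
    (hl : l = ![s - B, 1, s - B, 1])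
    (hμ : μ = (1 / (s ^ 2 + A - B)) • ![s - B, A, A, B * (s - 1)]) :
    (0 < s ∧ (s - 1) * (s - B) = A) ∧
      L.mulVec r = s • r ∧
      Matrix.vecMul l L = s • l ∧
      (∀ z ∈ spectrum ℂ (L.map (Complex.ofReal)), z ≠ (s : ℂ) →
        ‖z‖ < s) ∧
      ((∀ w, 0 < μ w) ∧ ∑ w, μ w = 1 ∧
        ∃ c : ℝ, 0 < c ∧ ∀ w, μ w = c * (l w * r w)) := by
  have hA0 : 0 < A := hA ▸ Real.exp_pos _
  have hB0 : 0 < B := hB ▸ Real.exp_pos _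
  set D := Real.sqrt ((1 - B) ^ 2 + 4 * A) with hDdef
  have hD2 : D ^ 2 = (1 - B) ^ 2 + 4 * A := Real.sq_sqrt (by positivity)
  have hDpos : 0 < D := Real.sqrt_pos.mpr (by positivity)
  have hD1 : 1 - B < D := by nlinarith
  have hD1' : B - 1 < D := by nlinarith
  have h2s : 2 * s = 1 + B + D := by rw [hs]; ring
  have hkey : (s - 1) * (s - B) = A := by nlinarith
  have hs0 : 0 < s := by nlinarith
  have hs1 : 0 < s - 1 := by nlinarith
  have hsB : 0 < s - B := by nlinarith
  have hden : s ^ 2 + A - B = s * D := by nlinarith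
  have hdenpos : 0 < s ^ 2 + A - B := by rw [hden]; positivity
  refine ⟨⟨hs0, hkey⟩, ?_, ?_, ?_, ?_, ?_, ?_⟩
  · subst hL hr
    funext w
    fin_cases w <;>
      simp [Matrix.mulVec, dotProduct, Fin.sum_univ_four, Matrix.vecHead, Matrix.vecTail] <;>
      first
        | ring1
        | linear_combination hkey
        | linear_combination -hkey
        | linear_combination 2 * hkey
        | linear_combination (-2 : ℝ) * hkey
        | linear_combination B * hkey
        | linear_combination (-B) * hkey
        | linear_combination (B + 1) * hkey
        | linear_combination (-(B + 1)) * hkey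
  · subst hL hl
    funext w
    fin_cases w <;>
      simp [Matrix.vecMul, dotProduct, Fin.sum_univ_four, Matrix.vecHead, Matrix.vecTail] <;>
      first
        | ring1
        | linear_combination hkey
        | linear_combination -hkey
        | linear_combination 2 * hkey
        | linear_combination (-2 : ℝ) * hkey
        | linear_combination B * hkey
        | linear_combination (-B) * hkey
        | linear_combination (B + 1) * hkey
        | linear_combination (-(B + 1)) * hkey
  · -- spectrum
    intro z hz hzs
    rw [spectrum.mem_iff, Algebra.algebraMap_eq_smul_one] at hz
    have hdet : (z • (1 : Matrix (Fin 4) (Fin 4) ℂ) - L.map Complex.ofReal).det = 0 := by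
      by_contra h
      exact hz ((Matrix.isUnit_iff_isUnit_det _).mpr (Ne.isUnit h))
    have hM : z • (1 : Matrix (Fin 4) (Fin 4) ℂ) - L.map Complex.ofReal =
        !![z - 1, 0, -1, 0; -(A : ℂ), z, -(A : ℂ), 0;
           0, -1, z, -1; 0, -(B : ℂ), 0, z - (B : ℂ)] := by
      subst hL
      ext i j
      fin_cases i <;> fin_cases j <;>
        simp [Matrix.one_apply, Matrix.vecHead, Matrix.vecTail]
    have hdet4 : (!![z - 1, 0, -1, 0; -(A : ℂ), z, -(A : ℂ), 0;
           0, -1, z, -1; 0, -(B : ℂ), 0, z - (B : ℂ)]).det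
        = z * z * (z * z - (1 + (B : ℂ)) * z + ((B : ℂ) - (A : ℂ))) := by
      simp [Matrix.det_succ_row_zero, Fin.sum_univ_succ, show (Fin.succAbove 2 2 : Fin 4) = 3 from rfl]
      ring
    rw [hM, hdet4] at hdet
    have hkC : ((s : ℂ) - 1) * ((s : ℂ) - (B : ℂ)) = (A : ℂ) := by
      exact_mod_cast congrArg (Complex.ofReal) hkey
    have hfac : z * z * (z - (s : ℂ)) * (z - ((1 + B - s : ℝ) : ℂ)) = 0 := by
      push_cast
      linear_combination hdet - (z * z) * hkC
    rcases mul_eq_zero.mp hfac with h | h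
    · rcases mul_eq_zero.mp h with h | h
      · have hz0 : z = 0 := by
          rcases mul_eq_zero.mp h with h | h
          · exact h
          · exact h
        rw [hz0]
        simpa using hs0
      · exact absurd (sub_eq_zero.mp h) hzs
    · have hz' : z = ((1 + B - s : ℝ) : ℂ) := sub_eq_zero.mp h
      rw [hz', Complex.norm_real, Real.norm_eq_abs, abs_lt]
      constructor <;> nlinarith
  · intro w
    subst hμ
    fin_cases w <;> simp [Pi.smul_apply] <;> positivity
  · subst hμ
    rw [Fin.sum_univ_four]
    simp only [Pi.smul_apply, smul_eq_mul, Matrix.cons_val_zero, Matrix.cons_val_one,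
      Matrix.head_cons, Matrix.cons_val_two, Matrix.tail_cons, Matrix.cons_val_three]
    field_simp
    first
      | linear_combination hkey
      | linear_combination -hkey
      | ring1
      | nlinarith
  · refine ⟨1 / (s ^ 2 + A - B), by positivity, ?_⟩
    subst hμ hl hr
    intro w
    fin_cases w <;> simp [Pi.smul_apply] <;>
      first
        | ring1
        | linear_combination (1 / (s ^ 2 + A - B)) * hkey
        | linear_combination (-(1 / (s ^ 2 + A - B))) * hkey
        | exact Or.inl (by linear_combination hkey)
        | exact Or.inl (by linear_combination -hkey)
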